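/- Let E be a real locally convex topological vector space with topological dual E′ carrying the weak-* topology. Let Ω ⊆ E be a nonempty open convex cone and let C ⊆ E′ be a nonempty weak-*-closed convex semi-equicontinuous subset such that Ω is contained in the interior of B(−C) = {x ∈ E : s_C(x) < ∞}. Set Ω^⋆ := {α ∈ E′ : α(x) ≥ 0 for all x ∈ Ω}. Then C − Ω^⋆ is weak-*-closed and semi-equicontinuous, and for every convex subset C₁ ⊆ E′ one has C₁ ⊆ C − Ω^⋆ if and only if s_{C₁}(x) ≤ s_C(x) for every x ∈ Ω. -/

import Mathlib

/-- The support functional `s_C : E → [-∞,∞]` of a set `C` of continuous linear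
functionals, `s_C(x) = sup_{α ∈ C} α(x)`. -/
noncomputable def supportFunctional {E : Type*} [AddCommGroup E] [Module ℝ E]
    [TopologicalSpace E] (C : Set (WeakDual ℝ E)) (x : E) : EReal :=
  sSup ((fun α : WeakDual ℝ E => (α x : EReal)) '' C)

/-- `C ⊆ E'` is semi-equicontinuous if its support functional is bounded above on some
nonempty open subset of `E`. -/
def SemiEquicontinuous {E : Type*} [AddCommGroup E] [Module ℝ E]
    [TopologicalSpace E] (C : Set (WeakDual ℝ E)) : Prop :=
  ∃ U : Set E, U.Nonempty ∧ IsOpen U ∧ ∃ M : ℝ, ∀ α ∈ C, ∀ u ∈ U, α u ≤ M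

open Filter Topology Pointwise

section aux
variable {E : Type*} [AddCommGroup E] [Module ℝ E] [TopologicalSpace E]

lemma sf_le_coe_iff (C : Set (WeakDual ℝ E)) (x : E) (r : ℝ) :
    supportFunctional C x ≤ (r : EReal) ↔ ∀ α ∈ C, α x ≤ r := by
  unfold supportFunctional
  rw [sSup_le_iff]
  constructor
  · intro h α hα
    have h2 := h _ (Set.mem_image_of_mem _ hα)
    have h3 : (α x : EReal) ≤ (r : EReal) := h2
    exact_mod_cast h3
  · rintro h _ ⟨α, hα, rfl⟩
    show (α x : EReal) ≤ (r : EReal)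
    exact_mod_cast h α hα

lemma coe_le_sf {C : Set (WeakDual ℝ E)} {α : WeakDual ℝ E} (hα : α ∈ C) (x : E) :
    (α x : EReal) ≤ supportFunctional C x :=
  le_sSup (Set.mem_image_of_mem _ hα)

lemma exists_sf_bound {C : Set (WeakDual ℝ E)} (hCne : C.Nonempty) {x : E}
    (h : supportFunctional C x ≠ ⊤) :
    ∃ r : ℝ, supportFunctional C x = (r : EReal) ∧ ∀ α ∈ C, α x ≤ r := by
  obtain ⟨α₀, hα₀⟩ := hCne
  have hbot : supportFunctional C x ≠ ⊥ := by
    intro hb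
    have := coe_le_sf hα₀ x
    rw [hb, le_bot_iff] at this
    exact (EReal.coe_ne_bot _) this
  refine ⟨(supportFunctional C x).toReal, (EReal.coe_toReal h hbot).symm, ?_⟩
  intro α hα
  have h2 := coe_le_sf hα x
  rw [← EReal.coe_toReal h hbot] at h2
  exact_mod_cast h2

lemma cone_add {Ω : Set E} (hconv : Convex ℝ Ω)
    (hcone : ∀ t : ℝ, 0 < t → ∀ x ∈ Ω, t • x ∈ Ω)
    {u v : E} (hu : u ∈ Ω) (hv : v ∈ Ω) : u + v ∈ Ω := by
  have h := hconv hu hv (by norm_num : (0:ℝ) ≤ 1/2) (by norm_num : (0:ℝ) ≤ 1/2) (by norm_num)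
  have h2 := hcone 2 (by norm_num) _ h
  have h3 : (2:ℝ) • ((1/2:ℝ) • u + (1/2:ℝ) • v) = u + v := by module
  rwa [h3] at h2

lemma exists_shift [ContinuousAdd E] [ContinuousSMul ℝ E] {Ω : Set E}
    (hΩne : Ω.Nonempty) (hΩopen : IsOpen Ω)
    (hΩcone : ∀ t : ℝ, 0 < t → ∀ x ∈ Ω, t • x ∈ Ω) (x : E) :
    ∃ u ∈ Ω, x + u ∈ Ω := by
  obtain ⟨u₀, hu₀⟩ := hΩne
  have hsm : Continuous fun c : ℝ => c • x := continuous_id.smul continuous_const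
  have h1 : Tendsto (fun t : ℝ => t⁻¹ • x + u₀) atTop (𝓝 ((0:ℝ) • x + u₀)) :=
    Filter.Tendsto.add_const u₀ ((hsm.tendsto 0).comp tendsto_inv_atTop_zero)
  rw [zero_smul, zero_add] at h1
  have h2 : ∀ᶠ t : ℝ in atTop, t⁻¹ • x + u₀ ∈ Ω := h1 (hΩopen.mem_nhds hu₀)
  obtain ⟨t, ht, htpos⟩ := (h2.and (eventually_gt_atTop 0)).exists
  refine ⟨t • u₀, hΩcone t htpos _ hu₀, ?_⟩
  have h3 := hΩcone t htpos _ ht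
  rwa [smul_add, smul_smul, mul_inv_cancel₀ htpos.ne', one_smul] at h3

lemma linearMap_continuous_of_bddAbove [IsTopologicalAddGroup E] [ContinuousSMul ℝ E]
    (g : E →ₗ[ℝ] ℝ) {U : Set E} (hU : IsOpen U) {u₀ : E} (hu₀ : u₀ ∈ U) {M : ℝ}
    (hbd : ∀ u ∈ U, g u ≤ M) : Continuous g := by
  set c := M - g u₀ with hc_def
  have hc : 0 ≤ c := sub_nonneg.2 (hbd u₀ hu₀)
  set V : Set E := ((u₀ + ·) ⁻¹' U) ∩ ((u₀ - ·) ⁻¹' U) with hV_def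
  have hV0 : V ∈ 𝓝 (0 : E) := by
    apply Filter.inter_mem
    · exact (hU.preimage (continuous_const.add continuous_id)).mem_nhds (by simpa using hu₀)
    · exact (hU.preimage (continuous_const.sub continuous_id)).mem_nhds (by simpa using hu₀)
  have habs : ∀ v ∈ V, |g v| ≤ c := by
    intro v hv
    rw [abs_le]
    have h1 : g (u₀ + v) ≤ M := hbd _ hv.1
    have h2 : g (u₀ - v) ≤ M := hbd _ hv.2
    rw [map_add] at h1
    rw [map_sub] at h2
    constructor <;> [linarith; linarith]
  apply continuous_of_continuousAt_zero g
  rw [ContinuousAt, map_zero]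
  rw [NormedAddCommGroup.tendsto_nhds_zero]
  intro ε hε
  have hpos : (0:ℝ) < ε / (c + 1) := by positivity
  have hmem : (ε / (c + 1)) • V ∈ 𝓝 (0 : E) := by
    have := (smul_mem_nhds_smul_iff₀ (c := ε / (c+1)) hpos.ne' (s := V) (x := (0:E))).2 hV0
    rwa [smul_zero] at this
  filter_upwards [hmem] with w hw
  obtain ⟨v, hv, rfl⟩ := hw
  rw [map_smul, smul_eq_mul, Real.norm_eq_abs, abs_mul, abs_of_pos hpos]
  calc ε / (c+1) * |g v| ≤ ε / (c+1) * c := by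
        exact mul_le_mul_of_nonneg_left (habs v hv) hpos.le
    _ < ε := by
        rw [div_mul_eq_mul_div, div_lt_iff₀ (by linarith)]
        nlinarith
end aux

section sep
variable {E : Type*} [AddCommGroup E] [Module ℝ E] [TopologicalSpace E]

lemma mem_of_eval_le {C : Set (WeakDual ℝ E)} (hCne : C.Nonempty) (hCclosed : IsClosed C)
    (hCconv : Convex ℝ C) (l : WeakDual ℝ E)
    (hl : ∀ (x : E) (r : ℝ), (∀ α ∈ C, α x ≤ r) → l x ≤ r) : l ∈ C := by
  classical
  by_contra hlC
  set ι : WeakDual ℝ E → (E → ℝ) := fun γ x => γ x with hι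
  have hnhds : 𝓝 l = Filter.comap ι (𝓝 (ι l)) := nhds_induced _ _
  have h1 : Cᶜ ∈ 𝓝 l := hCclosed.isOpen_compl.mem_nhds hlC
  rw [hnhds, Filter.mem_comap] at h1
  obtain ⟨Q, hQ, hQsub⟩ := h1
  obtain ⟨P, hPQ, hPopen, hlP⟩ := mem_nhds_iff.mp hQ
  obtain ⟨I, u, hu, hIP⟩ := isOpen_pi_iff.mp hPopen _ hlP
  -- choose balls inside u x
  have hball : ∀ i : ↥I, ∃ ε : ℝ, 0 < ε ∧ Metric.ball (l i) ε ⊆ u i := by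
    intro ⟨x, hx⟩
    obtain ⟨ε, hε, hsub⟩ := Metric.isOpen_iff.mp (hu x hx).1 _ (hu x hx).2
    exact ⟨ε, hε, hsub⟩
  choose ε hεpos hεball using hball
  -- the finite-dimensional picture
  set T : WeakDual ℝ E → (↥I → ℝ) := fun γ i => γ i with hT
  set S : Set (↥I → ℝ) := Set.univ.pi (fun i => Metric.ball (l i) (ε i)) with hS
  have hSopen : IsOpen S := isOpen_set_pi Set.finite_univ (fun i _ => Metric.isOpen_ball)
  have hSconv : Convex ℝ S := convex_pi (fun i _ => convex_ball _ _)
  have hTlin_exists : ∃ Tl : WeakDual ℝ E →ₗ[ℝ] (↥I → ℝ), ∀ γ, Tl γ = T γ := by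
    refine ⟨{ toFun := T, map_add' := ?_, map_smul' := ?_ }, fun γ => rfl⟩
    · intro γ δ; funext i; rfl
    · intro c γ; funext i; rfl
  obtain ⟨Tl, hTl⟩ := hTlin_exists
  have hTC_conv : Convex ℝ (T '' C) := by
    have := hCconv.linear_image Tl
    simpa [Set.image_congr' hTl] using this
  have hdisj : Disjoint S (T '' C) := by
    rw [Set.disjoint_left]
    rintro y hyS ⟨γ, hγC, rfl⟩
    have : ι γ ∈ (↑I : Set E).pi u := by
      intro x hx
      exact hεball ⟨x, hx⟩ (hyS ⟨x, hx⟩ (Set.mem_univ _))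
    exact hQsub (hPQ (hIP this)) hγC
  obtain ⟨f, r, hfS, hfC⟩ := geometric_hahn_banach_open hSconv hSopen hTC_conv hdisj
  -- express f ∘ T as evaluation
  set z : E := ∑ i : ↥I, f (Pi.single i (1:ℝ)) • (i : E) with hz
  have hfT : ∀ γ : WeakDual ℝ E, γ z = f (T γ) := by
    intro γ
    have h2 : T γ = ∑ i : ↥I, Pi.single i (T γ i) := (Finset.univ_sum_single (T γ)).symm
    rw [hz, map_sum, h2, map_sum]
    congr 1
    funext i
    have h3 : (Pi.single i (T γ i) : ↥I → ℝ) = (T γ i) • (Pi.single i (1:ℝ) : ↥I → ℝ) := by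
      funext j
      simp [Pi.single_apply]
    rw [h3, map_smul, map_smul, smul_eq_mul, smul_eq_mul]
    show f (Pi.single i (1:ℝ)) * γ (i:E) = γ (i:E) * f (Pi.single i (1:ℝ))
    ring
  have hTlS : T l ∈ S := by
    intro i _
    simpa [hT] using hεpos i
  have h4 : l z < r := by rw [hfT l]; exact hfS _ hTlS
  have h5 : ∀ α ∈ C, α (-z) ≤ -r := by
    intro α hα
    have := hfC _ (Set.mem_image_of_mem T hα)
    rw [← hfT α] at this
    rw [map_neg]
    linarith
  have h6 := hl (-z) (-r) h5
  rw [map_neg] at h6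
  linarith
end sep

section key
variable {E : Type*} [AddCommGroup E] [Module ℝ E] [TopologicalSpace E]
  [IsTopologicalAddGroup E] [ContinuousSMul ℝ E]

lemma key_lemma
    (Ω : Set E) (hΩne : Ω.Nonempty) (hΩopen : IsOpen Ω) (hΩconv : Convex ℝ Ω)
    (hΩcone : ∀ t : ℝ, 0 < t → ∀ x ∈ Ω, t • x ∈ Ω)
    (C : Set (WeakDual ℝ E)) (hCne : C.Nonempty) (hCclosed : IsClosed C)
    (hCconv : Convex ℝ C) (hCsec : SemiEquicontinuous C)
    (hΩsub : Ω ⊆ interior {x : E | supportFunctional C x < ⊤})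
    (γ : WeakDual ℝ E) (hγ : ∀ x ∈ Ω, (γ x : EReal) ≤ supportFunctional C x) :
    ∃ l ∈ C, ∃ b : WeakDual ℝ E, (∀ x ∈ Ω, 0 ≤ b x) ∧ γ = l - b := by
  -- uniform bounds on Ω
  have hbound : ∀ z ∈ Ω, ∃ r : ℝ, ∀ α ∈ C, α z ≤ r := by
    intro z hz
    have hz2 : supportFunctional C z ≠ ⊤ := by
      have := interior_subset (hΩsub hz)
      exact this.ne
    obtain ⟨r, _, hr⟩ := exists_sf_bound hCne hz2
    exact ⟨r, hr⟩
  -- the auxiliary sets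
  set A : E → Set ℝ := fun x => {t : ℝ | ∃ u ∈ Ω, ∀ α ∈ C, α (x + u) ≤ t + γ u} with hA
  have hAne : ∀ x : E, (A x).Nonempty := by
    intro x
    obtain ⟨u, hu, hxu⟩ := exists_shift hΩne hΩopen hΩcone x
    obtain ⟨r, hr⟩ := hbound _ (by
      have : x + u ∈ Ω := hxu
      exact this)
    exact ⟨r - γ u, u, hu, fun α hα => by linarith [hr α hα]⟩
  have hAadd : ∀ x y : E, ∀ t ∈ A x, ∀ t' ∈ A y, t + t' ∈ A (x + y) := by
    rintro x y t ⟨u, hu, hαu⟩ t' ⟨v, hv, hαv⟩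
    refine ⟨u + v, cone_add hΩconv hΩcone hu hv, fun α hα => ?_⟩
    have h1 := hαu α hα
    have h2 := hαv α hα
    have h3 : α (x + y + (u + v)) = α (x + u) + α (y + v) := by
      rw [← map_add]; congr 1; abel
    have h4 : γ (u + v) = γ u + γ v := map_add γ u v
    rw [h3, h4]; linarith
  have hA0 : ∀ t ∈ A 0, 0 ≤ t := by
    rintro t ⟨u, hu, hαu⟩
    have h1 : supportFunctional C u ≤ ((t + γ u : ℝ) : EReal) := by
      rw [sf_le_coe_iff]
      intro α hα
      have := hαu α hα
      rwa [zero_add] at this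
    have h2 := (hγ u hu).trans h1
    have h3 : γ u ≤ t + γ u := by exact_mod_cast h2
    linarith
  have hAbdd : ∀ x : E, BddBelow (A x) := by
    intro x
    obtain ⟨t', ht'⟩ := hAne (-x)
    refine ⟨-t', fun t ht => ?_⟩
    have := hA0 (t + t') (by
      have h := hAadd x (-x) t ht t' ht'
      rwa [add_neg_cancel] at h)
    linarith
  set q : E → ℝ := fun x => sInf (A x) with hq
  have hq_le : ∀ (x : E), ∀ t ∈ A x, q x ≤ t := fun x t ht => csInf_le (hAbdd x) ht
  have hq_add : ∀ x y : E, q (x + y) ≤ q x + q y := by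
    intro x y
    have h1 : ∀ t' ∈ A y, q (x + y) - t' ≤ q x := by
      intro t' ht'
      refine le_csInf (hAne x) (fun t ht => ?_)
      have := hq_le (x + y) (t + t') (hAadd x y t ht t' ht')
      linarith
    have h2 : q (x + y) - q x ≤ q y := by
      refine le_csInf (hAne y) (fun t' ht' => ?_)
      have := h1 t' ht'
      linarith
    linarith
  have hq_smul_le : ∀ c : ℝ, 0 < c → ∀ x : E, q (c • x) ≤ c * q x := by
    intro c hc x
    have hmem : ∀ t ∈ A x, c * t ∈ A (c • x) := by
      rintro t ⟨u, hu, hαu⟩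
      refine ⟨c • u, hΩcone c hc u hu, fun α hα => ?_⟩
      have h1 : α (c • x + c • u) = c * α (x + u) := by
        rw [← smul_add, map_smul, smul_eq_mul]
      have h2 : γ (c • u) = c * γ u := by rw [map_smul, smul_eq_mul]
      rw [h1, h2]
      have := hαu α hα
      nlinarith
    have : q (c • x) / c ≤ q x := by
      refine le_csInf (hAne x) (fun t ht => ?_)
      rw [div_le_iff₀ hc]
      have := hq_le (c • x) (c * t) (hmem t ht)
      linarith
    rw [div_le_iff₀ hc] at this
    linarith
  have hq_smul : ∀ c : ℝ, 0 < c → ∀ x : E, q (c • x) = c * q x := by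
    intro c hc x
    refine le_antisymm (hq_smul_le c hc x) ?_
    have h1 := hq_smul_le c⁻¹ (inv_pos.2 hc) (c • x)
    rw [inv_smul_smul₀ hc.ne'] at h1
    rw [← le_div_iff₀' hc, div_eq_inv_mul]
    exact h1
  -- Hahn-Banach
  have hq0 : ∀ x : (⊥ : Submodule ℝ E), (0 : (⊥ : Submodule ℝ E) →ₗ[ℝ] ℝ) x ≤ q x := by
    intro x
    have hx0 : (x : E) = 0 := x.2
    rw [hx0]
    simp only [LinearMap.zero_apply]
    exact le_csInf (hAne 0) (fun t ht => hA0 t ht)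
  obtain ⟨g, -, hg⟩ :=
    exists_extension_of_le_sublinear ⟨(⊥ : Submodule ℝ E), 0⟩ q hq_smul hq_add hq0
  -- g lies below the support functional
  have hgsf : ∀ x : E, (g x : EReal) ≤ supportFunctional C x := by
    intro x
    by_cases hx : supportFunctional C x = ⊤
    · rw [hx]; exact le_top
    obtain ⟨r₀, hr₀eq, hr₀⟩ := exists_sf_bound hCne hx
    obtain ⟨u₀, hu₀⟩ := hΩne
    obtain ⟨m₀, hm₀⟩ := hbound u₀ hu₀
    have claim : ∀ ε : ℝ, 0 < ε → g x ≤ r₀ + ε * (m₀ - γ u₀) := by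
      intro ε hε
      have ht : r₀ + ε * m₀ - ε * γ u₀ ∈ A x := by
        refine ⟨ε • u₀, hΩcone ε hε u₀ hu₀, fun α hα => ?_⟩
        have h1 : α (x + ε • u₀) = α x + ε * α u₀ := by
          rw [map_add, map_smul, smul_eq_mul]
        have h2 : γ (ε • u₀) = ε * γ u₀ := by rw [map_smul, smul_eq_mul]
        rw [h1, h2]
        have h3 := hr₀ α hα
        have h4 := hm₀ α hα
        nlinarith
      have := (hg x).trans (hq_le x _ ht)
      linarith
    have hgr : g x ≤ r₀ := by
      refine le_of_forall_pos_le_add (fun ε hε => ?_)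
      have hKpos : (0:ℝ) < |m₀ - γ u₀| + 1 := by positivity
      have h1 := claim (ε / (|m₀ - γ u₀| + 1)) (by positivity)
      have h2 : ε / (|m₀ - γ u₀| + 1) * (m₀ - γ u₀) ≤ ε := by
        rw [div_mul_eq_mul_div, div_le_iff₀ hKpos]
        have := le_abs_self (m₀ - γ u₀)
        nlinarith
      linarith
    rw [hr₀eq]
    exact_mod_cast hgr
  -- g dominates γ on Ω
  have hgγ : ∀ u ∈ Ω, γ u ≤ g u := by
    intro u hu
    obtain ⟨m, hm⟩ := hbound u hu
    have claim : ∀ ε : ℝ, 0 < ε → g (-u) ≤ -γ u + ε * (m - γ u) := by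
      intro ε hε
      have ht : ε * m - (1 + ε) * γ u ∈ A (-u) := by
        refine ⟨(1 + ε) • u, hΩcone (1 + ε) (by linarith) u hu, fun α hα => ?_⟩
        have h1 : -u + (1 + ε) • u = ε • u := by module
        have h2 : γ ((1 + ε) • u) = (1 + ε) * γ u := by rw [map_smul, smul_eq_mul]
        rw [h1, h2, map_smul, smul_eq_mul]
        have := hm α hα
        nlinarith
      have := (hg (-u)).trans (hq_le (-u) _ ht)
      linarith
    have h5 : g (-u) ≤ -γ u := by
      refine le_of_forall_pos_le_add (fun ε hε => ?_)
      have hKpos : (0:ℝ) < |m - γ u| + 1 := by positivity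
      have h1 := claim (ε / (|m - γ u| + 1)) (by positivity)
      have h2 : ε / (|m - γ u| + 1) * (m - γ u) ≤ ε := by
        rw [div_mul_eq_mul_div, div_le_iff₀ hKpos]
        have := le_abs_self (m - γ u)
        nlinarith
      linarith
    have h6 : g (-u) = -g u := map_neg g u
    linarith
  -- g is continuous
  obtain ⟨U, ⟨u₁, hu₁⟩, hUopen, M, hM⟩ := hCsec
  have hgU : ∀ u ∈ U, g u ≤ M := by
    intro u hu
    have h1 : supportFunctional C u ≤ ((M : ℝ) : EReal) := by
      rw [sf_le_coe_iff]
      exact fun α hα => hM α hα u hu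
    have h2 := (hgsf u).trans h1
    exact_mod_cast h2
  have hgcont : Continuous g := linearMap_continuous_of_bddAbove g hUopen hu₁ hgU
  set l : WeakDual ℝ E := (ContinuousLinearMap.mk g hgcont : E →L[ℝ] ℝ) with hl
  have hlapp : ∀ x : E, l x = g x := fun _ => rfl
  have hlC : l ∈ C := by
    apply mem_of_eval_le hCne hCclosed hCconv
    intro x r hr
    have h1 : supportFunctional C x ≤ ((r : ℝ) : EReal) := by
      rw [sf_le_coe_iff]; exact hr
    have h2 := (hgsf x).trans h1
    rw [hlapp]
    exact_mod_cast h2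
  refine ⟨l, hlC, l - γ, fun x hx => ?_, (sub_sub_cancel l γ).symm⟩
  have h1 : (l - γ) x = l x - γ x := rfl
  rw [h1, hlapp]
  have := hgγ x hx
  linarith
end key

/-- **Enlarging semi-equicontinuous sets by cones.** If `Ω` is a nonempty open convex
cone contained in the interior of `B(-C)` for a nonempty weak-*-closed convex
semi-equicontinuous set `C ⊆ E'`, then `C - Ω^⋆` is weak-*-closed and
semi-equicontinuous, and a convex set `C₁` is contained in `C - Ω^⋆` iff
`s_{C₁} ≤ s_C` on `Ω`. -/
theorem enlarging_by_dual_cone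
    {E : Type*} [AddCommGroup E] [Module ℝ E] [TopologicalSpace E]
    [IsTopologicalAddGroup E] [ContinuousSMul ℝ E] [LocallyConvexSpace ℝ E]
    (Ω : Set E) (hΩne : Ω.Nonempty) (hΩopen : IsOpen Ω) (hΩconv : Convex ℝ Ω)
    (hΩcone : ∀ t : ℝ, 0 < t → ∀ x ∈ Ω, t • x ∈ Ω)
    (C : Set (WeakDual ℝ E)) (hCne : C.Nonempty) (hCclosed : IsClosed C)
    (hCconv : Convex ℝ C) (hCsec : SemiEquicontinuous C)
    (hΩsub : Ω ⊆ interior {x : E | supportFunctional C x < ⊤})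
    (Ωstar : Set (WeakDual ℝ E))
    (hΩstar : Ωstar = {β : WeakDual ℝ E | ∀ x ∈ Ω, 0 ≤ β x})
    (D : Set (WeakDual ℝ E))
    (hD : D = {γ : WeakDual ℝ E | ∃ l ∈ C, ∃ b ∈ Ωstar, γ = l - b}) :
    IsClosed D ∧ SemiEquicontinuous D ∧
      ∀ C₁ : Set (WeakDual ℝ E), Convex ℝ C₁ →
        (C₁ ⊆ D ↔ ∀ x ∈ Ω, supportFunctional C₁ x ≤ supportFunctional C x) := by
  -- pointwise characterization of membership in D
  have hmemD : ∀ γ : WeakDual ℝ E,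
      γ ∈ D ↔ ∀ x ∈ Ω, (γ x : EReal) ≤ supportFunctional C x := by
    intro γ
    constructor
    · rw [hD]
      rintro ⟨l, hl, b, hb, rfl⟩ x hx
      rw [hΩstar] at hb
      have h1 : (l - b) x = l x - b x := rfl
      have h2 : ((l - b) x : EReal) ≤ ((l x : ℝ) : EReal) := by
        rw [h1]
        exact_mod_cast sub_le_self _ (hb x hx)
      exact h2.trans (coe_le_sf hl x)
    · intro hγ
      obtain ⟨l, hl, b, hb, heq⟩ :=
        key_lemma Ω hΩne hΩopen hΩconv hΩcone C hCne hCclosed hCconv hCsec hΩsub γ hγ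
      rw [hD]
      exact ⟨l, hl, b, by rw [hΩstar]; exact hb, heq⟩
  constructor
  · -- D is closed
    have hDeq : D = ⋂ x ∈ Ω, {γ : WeakDual ℝ E | (γ x : EReal) ≤ supportFunctional C x} := by
      ext γ
      simp only [Set.mem_iInter, Set.mem_setOf_eq]
      exact hmemD γ
    rw [hDeq]
    refine isClosed_biInter (fun x hx => ?_)
    have hcont : Continuous fun γ : WeakDual ℝ E => (γ x : EReal) :=
      continuous_coe_real_ereal.comp (WeakDual.eval_continuous x)
    exact isClosed_le hcont continuous_const
  constructor
  · -- D is semi-equicontinuous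
    obtain ⟨U, ⟨u₀, hu₀⟩, hUopen, M, hM⟩ := hCsec
    obtain ⟨x₀, hx₀⟩ := hΩne
    set c : ℝ → E := fun t => x₀ + t • (x₀ - u₀) with hc
    have hccont : Continuous c := continuous_const.add (continuous_id.smul continuous_const)
    have hc0 : c 0 = x₀ := by simp [hc]
    have h1 : ∀ᶠ t in 𝓝 (0:ℝ), c t ∈ interior {x : E | supportFunctional C x < ⊤} := by
      apply hccont.continuousAt.eventually_mem
      rw [hc0]
      exact isOpen_interior.mem_nhds (hΩsub hx₀)
    have h1' : ∀ᶠ t in 𝓝[Set.Ioi (0:ℝ)] 0, c t ∈ interior {x : E | supportFunctional C x < ⊤} :=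
      nhdsWithin_le_nhds h1
    obtain ⟨t, htmem, ht⟩ :=
      (h1'.and (eventually_mem_nhdsWithin (a := (0:ℝ)) (s := Set.Ioi 0))).exists
    rw [Set.mem_Ioi] at ht
    have hy : supportFunctional C (c t) ≠ ⊤ := (interior_subset htmem).ne
    obtain ⟨ry, -, hry⟩ := exists_sf_bound hCne hy
    set s : ℝ := 1 + t with hs
    have hs0 : s ≠ 0 := by rw [hs]; linarith
    set lam : ℝ := s⁻¹ with hlam
    set mu : ℝ := t * s⁻¹ with hmu
    have hlampos : 0 < lam := by rw [hlam]; positivity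
    have hmupos : 0 < mu := by rw [hmu]; positivity
    set φ : E → E := fun p => lam • c t + mu • p with hφ
    have hφopen : IsOpenMap φ := by
      have h2 : IsOpenMap fun p : E => mu • p := isOpenMap_smul₀ hmupos.ne'
      have h3 : IsOpenMap fun z : E => lam • c t + z := isOpenMap_add_left _
      exact h3.comp h2
    have hφx₀ : φ u₀ = x₀ := by
      show lam • (x₀ + t • (x₀ - u₀)) + mu • u₀ = x₀
      have h4 : lam • (x₀ + t • (x₀ - u₀)) + (t * lam) • u₀ = (lam * (1 + t)) • x₀ := by
        module
      rw [hmu, hlam] at *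
      rw [h4, show (s⁻¹ * (1 + t)) = 1 by rw [hs]; field_simp, one_smul]
    set W : Set E := (φ '' U) ∩ Ω with hW
    refine ⟨W, ⟨x₀, ⟨⟨u₀, hu₀, hφx₀⟩, hx₀⟩⟩, (hφopen U hUopen).inter hΩopen,
      lam * ry + mu * M, ?_⟩
    intro γ hγ w hw
    rw [hD] at hγ
    obtain ⟨l, hl, b, hb, rfl⟩ := hγ
    rw [hΩstar] at hb
    obtain ⟨⟨p, hp, rfl⟩, hφpΩ⟩ := hw
    have h5 : (l - b) (φ p) = l (φ p) - b (φ p) := rfl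
    have h6 : l (φ p) = lam * l (c t) + mu * l p := by
      show l (lam • c t + mu • p) = _
      rw [map_add, map_smul, map_smul, smul_eq_mul, smul_eq_mul]
    have h7 : l (c t) ≤ ry := hry l hl
    have h8 : l p ≤ M := hM l hl p hp
    have h9 : 0 ≤ b (φ p) := hb _ hφpΩ
    rw [h5, h6]
    nlinarith
  · -- the characterization of subsets of D
    intro C₁ _
    constructor
    · intro hsub x hx
      refine sSup_le ?_
      rintro _ ⟨γ, hγ, rfl⟩
      exact (hmemD γ).1 (hsub hγ) x hx
    · intro h γ hγ
      rw [hmemD γ]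
      intro x hx
      exact (coe_le_sf hγ x).trans (h x hx)
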